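/- For a, b, c \in \mathbb{N}_0, \zeta_1^{des}(-a) \cdot \zeta_2^{des}(-b,-c) = \sum_{i_1+j_1=b} \sum_{i_2+j_2=c} (-1)^{i_1+i_2} \binom{b}{i_1} \binom{c}{i_2} \, \zeta_3^{des}(-a-i_1-i_2, -j_1, -j_2). -/

import Mathlib

/-- The multivariate power series `f(∑_{j ∈ S} t_j)` obtained by substituting the
sum of the variables indexed by `S` into the one-variable power series `f`. -/
noncomputable def substSum {r : ℕ} (f : PowerSeries ℚ) (S : Finset (Fin r)) :
    MvPowerSeries (Fin r) ℚ :=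
  fun d => if d.support ⊆ S then
    (d.multinomial : ℚ) * PowerSeries.coeff (d.sum fun _ n => n) f else 0

/-- `Zgen r f = ∏_{i=1}^r f(t_i + ⋯ + t_r)` as a formal power series in `t_1, …, t_r`. -/
noncomputable def Zgen (r : ℕ) (f : PowerSeries ℚ) : MvPowerSeries (Fin r) ℚ :=
  ∏ i : Fin r, substSum f (Finset.Ici i)

/-- View a power series in the variables `t_2, …, t_{r+1}` (i.e. in `r` variables)
as a power series in `t_1, …, t_{r+1}` not involving the first variable. -/
noncomputable def shiftVar {r : ℕ} (f : MvPowerSeries (Fin r) ℚ) :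
    MvPowerSeries (Fin (r + 1)) ℚ :=
  fun d => if d 0 = 0 then
    f (Finsupp.comapDomain Fin.succ d (Fin.succ_injective r).injOn) else 0

/-- The desingularized value `ζ_r^{des}(-k_1, …, -k_r)`: namely `k_1! ⋯ k_r!` times
the coefficient of `(-t_1)^{k_1} ⋯ (-t_r)^{k_r}` in `Zgen r f`. -/
noncomputable def zetaDes (r : ℕ) (f : PowerSeries ℚ) (k : Fin r → ℕ) : ℚ :=
  (∏ i, ((-1 : ℚ) ^ (k i) * (k i).factorial)) *
    MvPowerSeries.coeff (Finsupp.equivFunOnFinite.symm k) (Zgen r f)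

open Finset

noncomputable def E1 (x : ℕ) : Fin 1 →₀ ℕ := Finsupp.equivFunOnFinite.symm ![x]
noncomputable def E2 (x y : ℕ) : Fin 2 →₀ ℕ := Finsupp.equivFunOnFinite.symm ![x, y]
@[simp] lemma E1_apply (x : ℕ) (i : Fin 1) : E1 x i = ![x] i := rfl
@[simp] lemma E2_apply (x y : ℕ) (i : Fin 2) : E2 x y i = ![x, y] i := rfl

lemma coeff_substSum {r : ℕ} (f : PowerSeries ℚ) (S : Finset (Fin r)) (d : Fin r →₀ ℕ) :
    MvPowerSeries.coeff d (substSum f S) =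
      if d.support ⊆ S then
        (d.multinomial : ℚ) * PowerSeries.coeff (d.sum fun _ n => n) f else 0 := rfl

lemma sum_E1 (x : ℕ) : ((E1 x).sum fun _ n => n) = x := by
  rw [Finsupp.sum_fintype _ _ (fun _ => rfl)]
  simp

lemma sum_E2 (x y : ℕ) : ((E2 x y).sum fun _ n => n) = x + y := by
  rw [Finsupp.sum_fintype _ _ (fun _ => rfl)]
  simp [Fin.sum_univ_two]

lemma Ici_zero_fin2 : Finset.Ici (0 : Fin 2) = Finset.univ := by decide

lemma supp_E2_Ici1 (x y : ℕ) :
    (E2 x y).support ⊆ Finset.Ici (1 : Fin 2) ↔ x = 0 := by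
  constructor
  · intro h
    by_contra hx
    have h0 : (0 : Fin 2) ∈ (E2 x y).support := Finsupp.mem_support_iff.2 (by simpa using hx)
    have := h h0
    revert this; decide
  · intro hx i hi
    rw [Finsupp.mem_support_iff] at hi
    fin_cases i
    · exact absurd (by simpa using hi) (by simp [hx])
    · decide

lemma nat_multinomial_subset {α} [DecidableEq α] (s t : Finset α) (f : α → ℕ)
    (hst : s ⊆ t) (h : ∀ i ∈ t, i ∉ s → f i = 0) :
    Nat.multinomial t f = Nat.multinomial s f := by
  have hp : (∏ i ∈ s, (f i).factorial) ≠ 0 :=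
    Finset.prod_ne_zero_iff.2 fun i _ => (Nat.factorial_ne_zero _)
  have hprod : (∏ i ∈ t, (f i).factorial) = ∏ i ∈ s, (f i).factorial := by
    refine (Finset.prod_subset hst fun i hi his => ?_).symm
    rw [h i hi his]; rfl
  have hsum : (∑ i ∈ t, f i) = ∑ i ∈ s, f i :=
    (Finset.sum_subset hst fun i hi his => h i hi his).symm
  have h1 := Nat.multinomial_spec t f
  have h2 := Nat.multinomial_spec s f
  rw [hprod, hsum, ← h2] at h1
  exact Nat.eq_of_mul_eq_mul_left (Nat.pos_of_ne_zero hp) h1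

lemma fin_multinomial_univ {r : ℕ} (d : Fin r →₀ ℕ) :
    d.multinomial = Nat.multinomial Finset.univ d := by
  rw [Finsupp.multinomial_eq]
  exact (nat_multinomial_subset d.support Finset.univ d (Finset.subset_univ _)
    fun i _ his => Finsupp.notMem_support_iff.1 his).symm

lemma multinomial_E1 (x : ℕ) : (E1 x).multinomial = 1 := by
  rw [fin_multinomial_univ]
  have : (Finset.univ : Finset (Fin 1)) = {0} := rfl
  rw [this, Nat.multinomial_singleton]

lemma multinomial_E2 (x y : ℕ) : (E2 x y).multinomial = (x + y).choose x := by
  rw [fin_multinomial_univ]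
  have : (Finset.univ : Finset (Fin 2)) = insert 0 {1} := rfl
  rw [this, Nat.multinomial_insert (by decide), Nat.multinomial_singleton]
  simp

lemma sum_antidiag2 (b c : ℕ) (g : (Fin 2 →₀ ℕ) × (Fin 2 →₀ ℕ) → ℚ) :
    ∑ p ∈ Finset.HasAntidiagonal.antidiagonal (E2 b c), g p =
    ∑ x ∈ range (b+1), ∑ y ∈ range (c+1), g (E2 x y, E2 (b-x) (c-y)) := by
  rw [← Finset.sum_product']
  refine Finset.sum_nbij' (fun p => (p.1 0, p.1 1))
    (fun q => (E2 q.1 q.2, E2 (b - q.1) (c - q.2))) ?_ ?_ ?_ ?_ ?_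
  · rintro ⟨p1, p2⟩ hp
    rw [Finset.HasAntidiagonal.mem_antidiagonal] at hp
    have h0 := DFunLike.congr_fun hp 0
    have h1 := DFunLike.congr_fun hp 1
    simp [Finsupp.add_apply] at h0 h1
    simp only [Finset.mem_product, Finset.mem_range]
    omega
  · rintro ⟨x, y⟩ hq
    simp only [Finset.mem_product, Finset.mem_range] at hq
    rw [Finset.HasAntidiagonal.mem_antidiagonal]
    ext i
    fin_cases i <;> simp <;> omega
  · rintro ⟨p1, p2⟩ hp
    rw [Finset.HasAntidiagonal.mem_antidiagonal] at hp
    have h0 := DFunLike.congr_fun hp 0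
    have h1 := DFunLike.congr_fun hp 1
    simp [Finsupp.add_apply] at h0 h1
    refine Prod.ext ?_ ?_ <;> simp only <;> ext i <;> fin_cases i <;> simp <;> omega
  · rintro ⟨x, y⟩ hq
    simp
  · rintro ⟨p1, p2⟩ hp
    rw [Finset.HasAntidiagonal.mem_antidiagonal] at hp
    have h0 := DFunLike.congr_fun hp 0
    have h1 := DFunLike.congr_fun hp 1
    simp [Finsupp.add_apply] at h0 h1
    congr 1
    refine Prod.ext ?_ ?_ <;> simp only <;> ext i <;> fin_cases i <;> simp <;> omega

lemma coeff_Zgen1 (F : PowerSeries ℚ) (x : ℕ) :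
    MvPowerSeries.coeff (E1 x) (Zgen 1 F) = PowerSeries.coeff x F := by
  rw [Zgen, Fin.prod_univ_one, coeff_substSum,
    if_pos (show (E1 x).support ⊆ Finset.Ici 0 from fun i _ => Finset.mem_Ici.2 (Fin.zero_le i)),
    multinomial_E1, sum_E1]
  simp

lemma coeff_Zgen2 (F : PowerSeries ℚ) (b c : ℕ) :
    MvPowerSeries.coeff (E2 b c) (Zgen 2 F) =
    ∑ y ∈ range (c+1), ((b+y).choose b : ℚ) * (PowerSeries.coeff (b+y) F)
      * (PowerSeries.coeff (c-y) F) := by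
  rw [Zgen, Fin.prod_univ_two, MvPowerSeries.coeff_mul, sum_antidiag2]
  rw [Finset.sum_eq_single b]
  · apply Finset.sum_congr rfl
    intro y hy
    rw [coeff_substSum, coeff_substSum,
      if_pos (show (E2 b y).support ⊆ Finset.Ici 0 from fun i _ => Finset.mem_Ici.2 (Fin.zero_le i)),
      if_pos ((supp_E2_Ici1 _ _).2 (Nat.sub_self b)),
      multinomial_E2, multinomial_E2, sum_E2, sum_E2, Nat.sub_self]
    simp [mul_assoc]
  · intro x hx hxb
    apply Finset.sum_eq_zero
    intro y hy
    rw [coeff_substSum (S := Finset.Ici 1), if_neg, mul_zero]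
    rw [supp_E2_Ici1]
    simp only [Finset.mem_range] at hx
    omega
  · intro h
    exact absurd (Finset.self_mem_range_succ b) h

noncomputable def E3 (x y z : ℕ) : Fin 3 →₀ ℕ := Finsupp.equivFunOnFinite.symm ![x, y, z]
@[simp] lemma E3_apply (x y z : ℕ) (i : Fin 3) : E3 x y z i = ![x, y, z] i := rfl

lemma multinomial_E3 (x y z : ℕ) :
    (E3 x y z).multinomial = (x + y + z).choose x * (y + z).choose y := by
  rw [fin_multinomial_univ]
  have : (Finset.univ : Finset (Fin 3)) = insert 0 (insert 1 {2}) := rfl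
  rw [this, Nat.multinomial_insert (by decide), Nat.multinomial_insert (by decide),
    Nat.multinomial_singleton]
  simp [add_assoc]

lemma sum_E3 (x y z : ℕ) : ((E3 x y z).sum fun _ n => n) = x + y + z := by
  rw [Finsupp.sum_fintype _ _ (fun _ => rfl)]
  simp [Fin.sum_univ_three]

lemma supp_E3_Ici1 (x y z : ℕ) :
    (E3 x y z).support ⊆ Finset.Ici (1 : Fin 3) ↔ x = 0 := by
  constructor
  · intro h
    by_contra hx
    have h0 : (0 : Fin 3) ∈ (E3 x y z).support := Finsupp.mem_support_iff.2 (by simpa using hx)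
    have := h h0
    revert this; decide
  · intro hx i hi
    rw [Finsupp.mem_support_iff] at hi
    fin_cases i
    · exact absurd (by simpa using hi) (by simp [hx])
    · decide
    · decide

lemma supp_E3_Ici2 (x y z : ℕ) :
    (E3 x y z).support ⊆ Finset.Ici (2 : Fin 3) ↔ x = 0 ∧ y = 0 := by
  constructor
  · intro h
    constructor
    · by_contra hx
      have h0 : (0 : Fin 3) ∈ (E3 x y z).support := Finsupp.mem_support_iff.2 (by simpa using hx)
      have := h h0
      revert this; decide
    · by_contra hy
      have h0 : (1 : Fin 3) ∈ (E3 x y z).support := Finsupp.mem_support_iff.2 (by simpa using hy)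
      have := h h0
      revert this; decide
  · rintro ⟨hx, hy⟩ i hi
    rw [Finsupp.mem_support_iff] at hi
    fin_cases i
    · exact absurd (by simpa using hi) (by simp [hx])
    · exact absurd (by simpa using hi) (by simp [hy])
    · decide

lemma sum_antidiag3 (k1 k2 k3 : ℕ) (g : (Fin 3 →₀ ℕ) × (Fin 3 →₀ ℕ) → ℚ) :
    ∑ p ∈ Finset.HasAntidiagonal.antidiagonal (E3 k1 k2 k3), g p =
    ∑ x ∈ range (k1+1), ∑ y ∈ range (k2+1), ∑ z ∈ range (k3+1),
      g (E3 x y z, E3 (k1-x) (k2-y) (k3-z)) := by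
  rw [show (∑ x ∈ range (k1+1), ∑ y ∈ range (k2+1), ∑ z ∈ range (k3+1),
      g (E3 x y z, E3 (k1-x) (k2-y) (k3-z))) =
      ∑ q ∈ (range (k1+1)) ×ˢ ((range (k2+1)) ×ˢ (range (k3+1))),
      g (E3 q.1 q.2.1 q.2.2, E3 (k1-q.1) (k2-q.2.1) (k3-q.2.2)) by
    rw [Finset.sum_product]; exact Finset.sum_congr rfl fun x _ => by rw [Finset.sum_product]]
  refine Finset.sum_nbij' (fun p => (p.1 0, (p.1 1, p.1 2)))
    (fun q => (E3 q.1 q.2.1 q.2.2, E3 (k1 - q.1) (k2 - q.2.1) (k3 - q.2.2))) ?_ ?_ ?_ ?_ ?_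
  · rintro ⟨p1, p2⟩ hp
    rw [Finset.HasAntidiagonal.mem_antidiagonal] at hp
    have h0 := DFunLike.congr_fun hp 0
    have h1 := DFunLike.congr_fun hp 1
    have h2 := DFunLike.congr_fun hp 2
    simp [Finsupp.add_apply] at h0 h1 h2
    simp only [Finset.mem_product, Finset.mem_range]
    omega
  · rintro ⟨x, y, z⟩ hq
    simp only [Finset.mem_product, Finset.mem_range] at hq
    rw [Finset.HasAntidiagonal.mem_antidiagonal]
    ext i
    fin_cases i <;> simp <;> omega
  · rintro ⟨p1, p2⟩ hp
    rw [Finset.HasAntidiagonal.mem_antidiagonal] at hp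
    have h0 := DFunLike.congr_fun hp 0
    have h1 := DFunLike.congr_fun hp 1
    have h2 := DFunLike.congr_fun hp 2
    simp [Finsupp.add_apply] at h0 h1 h2
    refine Prod.ext ?_ ?_ <;> simp only <;> ext i <;> fin_cases i <;> simp <;> omega
  · rintro ⟨x, y, z⟩ hq
    simp
  · rintro ⟨p1, p2⟩ hp
    rw [Finset.HasAntidiagonal.mem_antidiagonal] at hp
    have h0 := DFunLike.congr_fun hp 0
    have h1 := DFunLike.congr_fun hp 1
    have h2 := DFunLike.congr_fun hp 2
    simp [Finsupp.add_apply] at h0 h1 h2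
    congr 1
    refine Prod.ext ?_ ?_ <;> simp only <;> ext i <;> fin_cases i <;> simp <;> omega

lemma coeff_BC (F : PowerSeries ℚ) (m1 m2 m3 : ℕ) :
    MvPowerSeries.coeff (E3 m1 m2 m3) (substSum F (Finset.Ici 1) * substSum F (Finset.Ici 2)) =
    if m1 = 0 then
      ∑ z ∈ range (m3+1), ((m2+z).choose m2 : ℚ) * (PowerSeries.coeff (m2+z) F)
        * (PowerSeries.coeff (m3-z) F)
    else 0 := by
  rw [MvPowerSeries.coeff_mul, sum_antidiag3]
  by_cases h1 : m1 = 0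
  · subst h1
    rw [if_pos rfl, Finset.sum_range_one, Finset.sum_eq_single m2]
    · apply Finset.sum_congr rfl
      intro z hz
      rw [coeff_substSum, coeff_substSum,
        if_pos ((supp_E3_Ici1 _ _ _).2 rfl),
        if_pos ((supp_E3_Ici2 _ _ _).2 ⟨Nat.sub_self 0, Nat.sub_self m2⟩),
        multinomial_E3, multinomial_E3, sum_E3, sum_E3, Nat.sub_self, Nat.sub_self]
      push_cast
      simp [mul_assoc, mul_comm, mul_left_comm]
    · intro y hy hym
      apply Finset.sum_eq_zero
      intro z hz
      rw [coeff_substSum (S := Finset.Ici 2), if_neg, mul_zero]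
      rw [supp_E3_Ici2]
      simp only [Finset.mem_range] at hy
      omega
    · intro h
      exact absurd (Finset.self_mem_range_succ m2) h
  · rw [if_neg h1]
    apply Finset.sum_eq_zero; intro x hx
    apply Finset.sum_eq_zero; intro y hy
    apply Finset.sum_eq_zero; intro z hz
    by_cases hx0 : x = 0
    · rw [coeff_substSum (S := Finset.Ici 2), if_neg, mul_zero]
      rw [supp_E3_Ici2]
      omega
    · rw [coeff_substSum (S := Finset.Ici 1), if_neg, zero_mul]
      rw [supp_E3_Ici1]
      exact hx0

lemma coeff_Zgen3 (F : PowerSeries ℚ) (k1 k2 k3 : ℕ) :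
    MvPowerSeries.coeff (E3 k1 k2 k3) (Zgen 3 F) =
    ∑ y1 ∈ range (k2+1), ∑ z1 ∈ range (k3+1), ∑ z2 ∈ range (k3-z1+1),
      ((k1+y1+z1).choose k1 : ℚ) * ((y1+z1).choose y1 : ℚ)
        * (PowerSeries.coeff (k1+y1+z1) F)
        * ((k2-y1+z2).choose (k2-y1) : ℚ) * (PowerSeries.coeff (k2-y1+z2) F)
        * (PowerSeries.coeff (k3-z1-z2) F) := by
  rw [Zgen, Fin.prod_univ_three, mul_assoc, MvPowerSeries.coeff_mul, sum_antidiag3,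
    Finset.sum_eq_single k1]
  · apply Finset.sum_congr rfl
    intro y1 hy1
    apply Finset.sum_congr rfl
    intro z1 hz1
    rw [coeff_substSum,
      if_pos (show (E3 k1 y1 z1).support ⊆ Finset.Ici 0 from
        fun i _ => Finset.mem_Ici.2 (Fin.zero_le i)),
      coeff_BC, if_pos (Nat.sub_self k1), multinomial_E3, sum_E3, Finset.mul_sum]
    apply Finset.sum_congr rfl
    intro z2 hz2
    push_cast
    ring
  · intro x hx hxk
    apply Finset.sum_eq_zero; intro y hy
    apply Finset.sum_eq_zero; intro z hz
    rw [coeff_BC, if_neg, mul_zero]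
    simp only [Finset.mem_range] at hx
    omega
  · intro h
    exact absurd (Finset.self_mem_range_succ k1) h

lemma triangle (n : ℕ) (g : ℕ → ℕ → ℚ) :
    ∑ i ∈ range (n+1), ∑ j ∈ range (n-i+1), g i j
      = ∑ u ∈ range (n+1), ∑ i ∈ range (u+1), g i (u-i) := by
  rw [Finset.sum_sigma', Finset.sum_sigma']
  refine Finset.sum_nbij' (fun p => ⟨p.1 + p.2, p.1⟩) (fun q => ⟨q.2, q.1 - q.2⟩) ?_ ?_ ?_ ?_ ?_
  · rintro ⟨i, j⟩ h
    simp only [Finset.mem_sigma, Finset.mem_range] at *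
    omega
  · rintro ⟨u, i⟩ h
    simp only [Finset.mem_sigma, Finset.mem_range] at *
    omega
  · rintro ⟨i, j⟩ h
    simp only [Finset.mem_sigma, Finset.mem_range] at h
    have e : (i + j) - i = j := by omega
    simp [e]
  · rintro ⟨u, i⟩ h
    simp only [Finset.mem_sigma, Finset.mem_range] at h
    have e : i + (u - i) = u := by omega
    simp [e]
  · rintro ⟨i, j⟩ h
    rw [Nat.add_sub_cancel_left]

lemma altQ (n : ℕ) : ∑ i ∈ range (n+1), (-1:ℚ)^i * (n.choose i) = if n = 0 then 1 else 0 := by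
  have h := Int.alternating_sum_range_choose (n := n)
  have h2 := congrArg (fun z : ℤ => (z : ℚ)) h
  push_cast at h2
  simpa [apply_ite (fun z : ℤ => (z : ℚ))] using h2

lemma key (a b c u v i1 i2 : ℕ) (h1 : i1 ≤ u) (hu : u ≤ b) (h2 : i2 ≤ v) (hv : v ≤ c) :
    ((b.choose i1 : ℚ) * (c.choose i2) * (a+i1+i2).factorial * (b-i1).factorial
      * (c-i2).factorial * ((a+u+v).choose (a+i1+i2)) * (((u-i1)+(v-i2)).choose (u-i1)))
    = ((b.factorial : ℚ) * c.factorial * (a+u+v).factorial)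
        / (u.factorial * v.factorial) * (u.choose i1) * (v.choose i2) := by
  obtain ⟨j1, rfl⟩ : ∃ j, u = i1 + j := ⟨u - i1, by omega⟩
  obtain ⟨j2, rfl⟩ : ∃ j, v = i2 + j := ⟨v - i2, by omega⟩
  simp only [Nat.add_sub_cancel_left]
  have nz : ∀ m : ℕ, ((m.factorial : ℚ)) ≠ 0 := fun m => Nat.cast_ne_zero.2 (Nat.factorial_ne_zero m)
  rw [Nat.cast_choose ℚ (show i1 ≤ b by omega),
    Nat.cast_choose ℚ (show i2 ≤ c by omega),
    Nat.cast_choose ℚ (show a+i1+i2 ≤ a+(i1+j1)+(i2+j2) by omega),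
    show a+(i1+j1)+(i2+j2) - (a+i1+i2) = j1+j2 by omega,
    Nat.cast_choose ℚ (show j1 ≤ j1+j2 by omega),
    Nat.add_sub_cancel_left,
    Nat.cast_choose ℚ (show i1 ≤ i1+j1 by omega),
    Nat.add_sub_cancel_left,
    Nat.cast_choose ℚ (show i2 ≤ i2+j2 by omega),
    Nat.add_sub_cancel_left]
  field_simp

lemma innerAltSum (a b c u v : ℕ) (hu : u ≤ b) (hv : v ≤ c) :
    (∑ i1 ∈ range (u+1), ∑ i2 ∈ range (v+1),
      (-1:ℚ)^(i1+i2) * (b.choose i1) * (c.choose i2) * ((a+i1+i2).factorial : ℚ)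
        * ((b-i1).factorial) * ((c-i2).factorial) * ((a+u+v).choose (a+i1+i2))
        * (((u-i1)+(v-i2)).choose (u-i1)))
    = if u = 0 ∧ v = 0 then
        ((a.factorial : ℚ) * (b.factorial) * (c.factorial)) else 0 := by
  have step : (∑ i1 ∈ range (u+1), ∑ i2 ∈ range (v+1),
      (-1:ℚ)^(i1+i2) * (b.choose i1) * (c.choose i2) * ((a+i1+i2).factorial : ℚ)
        * ((b-i1).factorial) * ((c-i2).factorial) * ((a+u+v).choose (a+i1+i2))
        * (((u-i1)+(v-i2)).choose (u-i1)))
      = ((b.factorial : ℚ) * c.factorial * (a+u+v).factorial)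
          / (u.factorial * v.factorial)
        * ((∑ i1 ∈ range (u+1), (-1:ℚ)^i1 * (u.choose i1))
          * (∑ i2 ∈ range (v+1), (-1:ℚ)^i2 * (v.choose i2))) := by
    rw [Finset.sum_mul_sum, Finset.mul_sum]
    apply Finset.sum_congr rfl
    intro i1 h1
    rw [Finset.mul_sum]
    apply Finset.sum_congr rfl
    intro i2 h2
    simp only [Finset.mem_range] at h1 h2
    have hk := key a b c u v i1 i2 (by omega) hu (by omega) hv
    calc (-1:ℚ)^(i1+i2) * (b.choose i1) * (c.choose i2) * ((a+i1+i2).factorial : ℚ)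
        * ((b-i1).factorial) * ((c-i2).factorial) * ((a+u+v).choose (a+i1+i2))
        * (((u-i1)+(v-i2)).choose (u-i1))
        = (-1:ℚ)^(i1+i2) * ((b.choose i1 : ℚ) * (c.choose i2) * (a+i1+i2).factorial
          * (b-i1).factorial * (c-i2).factorial * ((a+u+v).choose (a+i1+i2))
          * (((u-i1)+(v-i2)).choose (u-i1))) := by ring
      _ = (-1:ℚ)^(i1+i2) * (((b.factorial : ℚ) * c.factorial * (a+u+v).factorial)
            / (u.factorial * v.factorial) * (u.choose i1) * (v.choose i2)) := by rw [hk]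
      _ = ((b.factorial : ℚ) * c.factorial * (a+u+v).factorial) / (u.factorial * v.factorial)
            * ((-1:ℚ)^i1 * (u.choose i1) * ((-1:ℚ)^i2 * (v.choose i2))) := by
          rw [pow_add]; ring
  rw [step, altQ, altQ]
  by_cases hu0 : u = 0
  · by_cases hv0 : v = 0
    · subst hu0; subst hv0
      simp only [if_pos rfl, and_self]
      norm_num [Nat.factorial_zero]
      ring
    · subst hu0
      simp [hv0]
  · simp [hu0]

lemma combinat (φ : ℕ → ℚ) (a b c : ℕ) :
    (∑ i1 ∈ range (b+1), ∑ i2 ∈ range (c+1),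
      (-1:ℚ)^(i1+i2) * (b.choose i1) * (c.choose i2) *
        (((a+i1+i2).factorial : ℚ) * ((b-i1).factorial) * ((c-i2).factorial)) *
        ∑ y1 ∈ range (b-i1+1), ∑ z1 ∈ range (c-i2+1), ∑ z2 ∈ range (c-i2-z1+1),
          ((a+i1+i2+y1+z1).choose (a+i1+i2) : ℚ) * ((y1+z1).choose y1)
            * φ (a+i1+i2+y1+z1) * ((b-i1-y1+z2).choose (b-i1-y1)) * φ (b-i1-y1+z2)
            * φ (c-i2-z1-z2))
    = (a.factorial : ℚ) * b.factorial * c.factorial *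
        ∑ y ∈ range (c+1), ((b+y).choose b : ℚ) * φ a * φ (b+y) * φ (c-y) := by
  calc
    (∑ i1 ∈ range (b+1), ∑ i2 ∈ range (c+1),
      (-1:ℚ)^(i1+i2) * (b.choose i1) * (c.choose i2) *
        (((a+i1+i2).factorial : ℚ) * ((b-i1).factorial) * ((c-i2).factorial)) *
        ∑ y1 ∈ range (b-i1+1), ∑ z1 ∈ range (c-i2+1), ∑ z2 ∈ range (c-i2-z1+1),
          ((a+i1+i2+y1+z1).choose (a+i1+i2) : ℚ) * ((y1+z1).choose y1)
            * φ (a+i1+i2+y1+z1) * ((b-i1-y1+z2).choose (b-i1-y1)) * φ (b-i1-y1+z2)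
            * φ (c-i2-z1-z2))
      = ∑ i1 ∈ range (b+1), ∑ i2 ∈ range (c+1), ∑ y1 ∈ range (b-i1+1),
          ∑ z1 ∈ range (c-i2+1), ∑ z2 ∈ range (c-i2-z1+1),
          ((-1:ℚ)^(i1+i2) * (b.choose i1) * (c.choose i2) *
            (((a+i1+i2).factorial : ℚ) * ((b-i1).factorial) * ((c-i2).factorial))) *
          (((a+i1+i2+y1+z1).choose (a+i1+i2) : ℚ) * ((y1+z1).choose y1)
            * φ (a+i1+i2+y1+z1) * ((b-i1-y1+z2).choose (b-i1-y1)) * φ (b-i1-y1+z2)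
            * φ (c-i2-z1-z2)) := by
        refine Finset.sum_congr rfl fun i1 _ => Finset.sum_congr rfl fun i2 _ => ?_
        rw [Finset.mul_sum]
        refine Finset.sum_congr rfl fun y1 _ => ?_
        rw [Finset.mul_sum]
        refine Finset.sum_congr rfl fun z1 _ => ?_
        rw [Finset.mul_sum]
    _ = ∑ i1 ∈ range (b+1), ∑ y1 ∈ range (b-i1+1), ∑ i2 ∈ range (c+1),
          ∑ z1 ∈ range (c-i2+1), ∑ z2 ∈ range (c-i2-z1+1),
          ((-1:ℚ)^(i1+i2) * (b.choose i1) * (c.choose i2) *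
            (((a+i1+i2).factorial : ℚ) * ((b-i1).factorial) * ((c-i2).factorial))) *
          (((a+i1+i2+y1+z1).choose (a+i1+i2) : ℚ) * ((y1+z1).choose y1)
            * φ (a+i1+i2+y1+z1) * ((b-i1-y1+z2).choose (b-i1-y1)) * φ (b-i1-y1+z2)
            * φ (c-i2-z1-z2)) := by
        exact Finset.sum_congr rfl fun i1 _ => Finset.sum_comm
    _ = ∑ u ∈ range (b+1), ∑ i1 ∈ range (u+1), ∑ i2 ∈ range (c+1),
          ∑ z1 ∈ range (c-i2+1), ∑ z2 ∈ range (c-i2-z1+1),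
          ((-1:ℚ)^(i1+i2) * (b.choose i1) * (c.choose i2) *
            (((a+i1+i2).factorial : ℚ) * ((b-i1).factorial) * ((c-i2).factorial))) *
          (((a+i1+i2+(u-i1)+z1).choose (a+i1+i2) : ℚ) * (((u-i1)+z1).choose (u-i1))
            * φ (a+i1+i2+(u-i1)+z1) * ((b-i1-(u-i1)+z2).choose (b-i1-(u-i1)))
            * φ (b-i1-(u-i1)+z2) * φ (c-i2-z1-z2)) := by
        exact triangle b _
    _ = ∑ u ∈ range (b+1), ∑ i1 ∈ range (u+1), ∑ v ∈ range (c+1), ∑ i2 ∈ range (v+1),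
          ∑ z2 ∈ range (c-i2-(v-i2)+1),
          ((-1:ℚ)^(i1+i2) * (b.choose i1) * (c.choose i2) *
            (((a+i1+i2).factorial : ℚ) * ((b-i1).factorial) * ((c-i2).factorial))) *
          (((a+i1+i2+(u-i1)+(v-i2)).choose (a+i1+i2) : ℚ) * (((u-i1)+(v-i2)).choose (u-i1))
            * φ (a+i1+i2+(u-i1)+(v-i2)) * ((b-i1-(u-i1)+z2).choose (b-i1-(u-i1)))
            * φ (b-i1-(u-i1)+z2) * φ (c-i2-(v-i2)-z2)) := by
        exact Finset.sum_congr rfl fun u _ => Finset.sum_congr rfl fun i1 _ => triangle c _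
    _ = ∑ u ∈ range (b+1), ∑ i1 ∈ range (u+1), ∑ v ∈ range (c+1), ∑ i2 ∈ range (v+1),
          ∑ z2 ∈ range (c-v+1),
          ((-1:ℚ)^(i1+i2) * (b.choose i1) * (c.choose i2) *
            (((a+i1+i2).factorial : ℚ) * ((b-i1).factorial) * ((c-i2).factorial))) *
          (((a+u+v).choose (a+i1+i2) : ℚ) * (((u-i1)+(v-i2)).choose (u-i1))
            * φ (a+u+v) * ((b-u+z2).choose (b-u))
            * φ (b-u+z2) * φ (c-v-z2)) := by
        refine Finset.sum_congr rfl fun u hu => Finset.sum_congr rfl fun i1 hi1 =>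
          Finset.sum_congr rfl fun v hv => Finset.sum_congr rfl fun i2 hi2 => ?_
        simp only [Finset.mem_range] at hu hi1 hv hi2
        rw [show a+i1+i2+(u-i1)+(v-i2) = a+u+v by omega,
          show b-i1-(u-i1) = b-u by omega,
          show c-i2-(v-i2) = c-v by omega]
    _ = ∑ u ∈ range (b+1), ∑ v ∈ range (c+1), ∑ i1 ∈ range (u+1), ∑ i2 ∈ range (v+1),
          ∑ z2 ∈ range (c-v+1),
          ((-1:ℚ)^(i1+i2) * (b.choose i1) * (c.choose i2) *
            (((a+i1+i2).factorial : ℚ) * ((b-i1).factorial) * ((c-i2).factorial))) *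
          (((a+u+v).choose (a+i1+i2) : ℚ) * (((u-i1)+(v-i2)).choose (u-i1))
            * φ (a+u+v) * ((b-u+z2).choose (b-u))
            * φ (b-u+z2) * φ (c-v-z2)) := by
        exact Finset.sum_congr rfl fun u _ => Finset.sum_comm
    _ = ∑ u ∈ range (b+1), ∑ v ∈ range (c+1), ∑ i1 ∈ range (u+1), ∑ z2 ∈ range (c-v+1),
          ∑ i2 ∈ range (v+1),
          ((-1:ℚ)^(i1+i2) * (b.choose i1) * (c.choose i2) *
            (((a+i1+i2).factorial : ℚ) * ((b-i1).factorial) * ((c-i2).factorial))) *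
          (((a+u+v).choose (a+i1+i2) : ℚ) * (((u-i1)+(v-i2)).choose (u-i1))
            * φ (a+u+v) * ((b-u+z2).choose (b-u))
            * φ (b-u+z2) * φ (c-v-z2)) := by
        exact Finset.sum_congr rfl fun u _ => Finset.sum_congr rfl fun v _ =>
          Finset.sum_congr rfl fun i1 _ => Finset.sum_comm
    _ = ∑ u ∈ range (b+1), ∑ v ∈ range (c+1), ∑ z2 ∈ range (c-v+1),
          ∑ i1 ∈ range (u+1), ∑ i2 ∈ range (v+1),
          ((-1:ℚ)^(i1+i2) * (b.choose i1) * (c.choose i2) *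
            (((a+i1+i2).factorial : ℚ) * ((b-i1).factorial) * ((c-i2).factorial))) *
          (((a+u+v).choose (a+i1+i2) : ℚ) * (((u-i1)+(v-i2)).choose (u-i1))
            * φ (a+u+v) * ((b-u+z2).choose (b-u))
            * φ (b-u+z2) * φ (c-v-z2)) := by
        exact Finset.sum_congr rfl fun u _ => Finset.sum_congr rfl fun v _ => Finset.sum_comm
    _ = ∑ u ∈ range (b+1), ∑ v ∈ range (c+1), ∑ z2 ∈ range (c-v+1),
          (φ (a+u+v) * ((b-u+z2).choose (b-u) : ℚ) * φ (b-u+z2) * φ (c-v-z2)) *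
          (if u = 0 ∧ v = 0 then ((a.factorial : ℚ) * (b.factorial) * (c.factorial)) else 0) := by
        refine Finset.sum_congr rfl fun u hu => Finset.sum_congr rfl fun v hv =>
          Finset.sum_congr rfl fun z2 _ => ?_
        simp only [Finset.mem_range] at hu hv
        rw [show (∑ i1 ∈ range (u+1), ∑ i2 ∈ range (v+1),
            ((-1:ℚ)^(i1+i2) * (b.choose i1) * (c.choose i2) *
              (((a+i1+i2).factorial : ℚ) * ((b-i1).factorial) * ((c-i2).factorial))) *
            (((a+u+v).choose (a+i1+i2) : ℚ) * (((u-i1)+(v-i2)).choose (u-i1))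
              * φ (a+u+v) * ((b-u+z2).choose (b-u))
              * φ (b-u+z2) * φ (c-v-z2)))
          = (φ (a+u+v) * ((b-u+z2).choose (b-u) : ℚ) * φ (b-u+z2) * φ (c-v-z2)) *
            ∑ i1 ∈ range (u+1), ∑ i2 ∈ range (v+1),
              (-1:ℚ)^(i1+i2) * (b.choose i1) * (c.choose i2) * ((a+i1+i2).factorial : ℚ)
                * ((b-i1).factorial) * ((c-i2).factorial) * ((a+u+v).choose (a+i1+i2))
                * (((u-i1)+(v-i2)).choose (u-i1)) by
          rw [Finset.mul_sum]
          refine Finset.sum_congr rfl fun i1 _ => ?_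
          rw [Finset.mul_sum]
          refine Finset.sum_congr rfl fun i2 _ => ?_
          ring]
        rw [innerAltSum a b c u v (by omega) (by omega)]
    _ = (a.factorial : ℚ) * b.factorial * c.factorial *
          ∑ y ∈ range (c+1), ((b+y).choose b : ℚ) * φ a * φ (b+y) * φ (c-y) := by
        rw [Finset.sum_eq_single 0]
        · rw [Finset.sum_eq_single 0]
          · rw [Finset.mul_sum]
            simp only [Nat.sub_zero, Nat.add_zero, add_zero, and_self, if_pos]
            refine Finset.sum_congr rfl fun y _ => ?_
            ring
          · intro v _ hv0
            refine Finset.sum_eq_zero fun z2 _ => ?_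
            rw [if_neg (by simp [hv0]), mul_zero]
          · intro h
            exact absurd (Finset.self_mem_range_succ 0) (by simpa using h)
        · intro u _ hu0
          refine Finset.sum_eq_zero fun v _ => Finset.sum_eq_zero fun z2 _ => ?_
          rw [if_neg (by simp [hu0]), mul_zero]
        · intro h
          exact absurd (Finset.self_mem_range_succ 0) (by simpa using h)

lemma zeta1_eq (F : PowerSeries ℚ) (a : ℕ) :
    zetaDes 1 F ![a] = (-1:ℚ)^a * (a.factorial : ℚ) * PowerSeries.coeff a F := by
  rw [zetaDes, show (Finsupp.equivFunOnFinite.symm ![a] : Fin 1 →₀ ℕ) = E1 a from rfl,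
    coeff_Zgen1, Fin.prod_univ_one]
  simp [mul_assoc]

lemma zeta2_eq (F : PowerSeries ℚ) (b c : ℕ) :
    zetaDes 2 F ![b, c] = (-1:ℚ)^(b+c) * ((b.factorial : ℚ) * c.factorial) *
      ∑ y ∈ range (c+1), ((b+y).choose b : ℚ) * (PowerSeries.coeff (b+y) F)
        * (PowerSeries.coeff (c-y) F) := by
  rw [zetaDes, show (Finsupp.equivFunOnFinite.symm ![b, c] : Fin 2 →₀ ℕ) = E2 b c from rfl,
    coeff_Zgen2, Fin.prod_univ_two]
  simp only [Matrix.cons_val_zero, Matrix.cons_val_one, Matrix.head_cons, pow_add]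
  ring

lemma zeta3_eq (F : PowerSeries ℚ) (k1 k2 k3 : ℕ) :
    zetaDes 3 F ![k1, k2, k3] = (-1:ℚ)^(k1+k2+k3)
      * ((k1.factorial : ℚ) * k2.factorial * k3.factorial) *
      ∑ y1 ∈ range (k2+1), ∑ z1 ∈ range (k3+1), ∑ z2 ∈ range (k3-z1+1),
        ((k1+y1+z1).choose k1 : ℚ) * ((y1+z1).choose y1 : ℚ)
          * (PowerSeries.coeff (k1+y1+z1) F)
          * ((k2-y1+z2).choose (k2-y1) : ℚ) * (PowerSeries.coeff (k2-y1+z2) F)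
          * (PowerSeries.coeff (k3-z1-z2) F) := by
  rw [zetaDes, show (Finsupp.equivFunOnFinite.symm ![k1, k2, k3] : Fin 3 →₀ ℕ)
      = E3 k1 k2 k3 from rfl, coeff_Zgen3, Fin.prod_univ_three]
  simp only [Matrix.cons_val_zero, Matrix.cons_val_one, Matrix.head_cons,
    Matrix.cons_val_two, Matrix.tail_cons, pow_add]
  ring

lemma rhs_total (F : PowerSeries ℚ) (a b c : ℕ) :
    (∑ i1 ∈ range (b+1), ∑ i2 ∈ range (c+1),
      (-1:ℚ)^(i1+i2) * (b.choose i1 : ℚ) * (c.choose i2 : ℚ)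
        * zetaDes 3 F ![a+i1+i2, b-i1, c-i2])
    = (-1:ℚ)^(a+b+c) * ((a.factorial : ℚ) * b.factorial * c.factorial *
        ∑ y ∈ range (c+1), ((b+y).choose b : ℚ) * (PowerSeries.coeff a F)
          * (PowerSeries.coeff (b+y) F) * (PowerSeries.coeff (c-y) F)) := by
  calc
    (∑ i1 ∈ range (b+1), ∑ i2 ∈ range (c+1),
      (-1:ℚ)^(i1+i2) * (b.choose i1 : ℚ) * (c.choose i2 : ℚ)
        * zetaDes 3 F ![a+i1+i2, b-i1, c-i2])
      = ∑ i1 ∈ range (b+1), ∑ i2 ∈ range (c+1), (-1:ℚ)^(a+b+c) *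
          ((-1:ℚ)^(i1+i2) * (b.choose i1) * (c.choose i2) *
            (((a+i1+i2).factorial : ℚ) * ((b-i1).factorial) * ((c-i2).factorial)) *
            ∑ y1 ∈ range (b-i1+1), ∑ z1 ∈ range (c-i2+1), ∑ z2 ∈ range (c-i2-z1+1),
              ((a+i1+i2+y1+z1).choose (a+i1+i2) : ℚ) * ((y1+z1).choose y1)
                * (PowerSeries.coeff (a+i1+i2+y1+z1) F)
                * ((b-i1-y1+z2).choose (b-i1-y1)) * (PowerSeries.coeff (b-i1-y1+z2) F)
                * (PowerSeries.coeff (c-i2-z1-z2) F)) := by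
        refine Finset.sum_congr rfl fun i1 hi1 => Finset.sum_congr rfl fun i2 hi2 => ?_
        simp only [Finset.mem_range] at hi1 hi2
        rw [zeta3_eq, show (a+i1+i2)+(b-i1)+(c-i2) = a+b+c by omega]
        ring
    _ = (-1:ℚ)^(a+b+c) *
          ∑ i1 ∈ range (b+1), ∑ i2 ∈ range (c+1),
          ((-1:ℚ)^(i1+i2) * (b.choose i1) * (c.choose i2) *
            (((a+i1+i2).factorial : ℚ) * ((b-i1).factorial) * ((c-i2).factorial)) *
            ∑ y1 ∈ range (b-i1+1), ∑ z1 ∈ range (c-i2+1), ∑ z2 ∈ range (c-i2-z1+1),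
              ((a+i1+i2+y1+z1).choose (a+i1+i2) : ℚ) * ((y1+z1).choose y1)
                * (PowerSeries.coeff (a+i1+i2+y1+z1) F)
                * ((b-i1-y1+z2).choose (b-i1-y1)) * (PowerSeries.coeff (b-i1-y1+z2) F)
                * (PowerSeries.coeff (c-i2-z1-z2) F)) := by
        simp only [← Finset.mul_sum]
    _ = (-1:ℚ)^(a+b+c) * ((a.factorial : ℚ) * b.factorial * c.factorial *
          ∑ y ∈ range (c+1), ((b+y).choose b : ℚ) * (PowerSeries.coeff a F)
            * (PowerSeries.coeff (b+y) F) * (PowerSeries.coeff (c-y) F)) := by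
        congr 1
        exact combinat (fun n => PowerSeries.coeff n F) a b c

/-- Depth `(1,2)` shuffle-type product: for `a, b, c ∈ ℕ₀`,
`ζ_1^{des}(-a) ζ_2^{des}(-b,-c) = ∑_{i_1+j_1=b} ∑_{i_2+j_2=c}
(-1)^{i_1+i_2} C(b,i_1) C(c,i_2) ζ_3^{des}(-a-i_1-i_2, -j_1, -j_2)`. -/
theorem zetaDes_shuffle_one_two (F : PowerSeries ℚ)
    (hF : (PowerSeries.exp ℚ - 1) ^ 2 * F =
      (1 - PowerSeries.X) * PowerSeries.exp ℚ - 1) (a b c : ℕ) :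
    zetaDes 1 F ![a] * zetaDes 2 F ![b, c] =
      ∑ m₁ ∈ Finset.HasAntidiagonal.antidiagonal b, ∑ m₂ ∈ Finset.HasAntidiagonal.antidiagonal c,
        (-1 : ℚ) ^ (m₁.1 + m₂.1) * (b.choose m₁.1 : ℚ) * (c.choose m₂.1 : ℚ) *
          zetaDes 3 F ![a + m₁.1 + m₂.1, m₁.2, m₂.2] := by
  rw [zeta1_eq, zeta2_eq]
  simp only [Finset.Nat.sum_antidiagonal_eq_sum_range_succ_mk, Nat.succ_eq_add_one]
  rw [show (∑ i1 ∈ range (b+1), ∑ i2 ∈ range (c+1),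
      (-1:ℚ)^(i1+i2) * (b.choose i1 : ℚ) * (c.choose i2 : ℚ)
        * zetaDes 3 F ![a+i1+i2, b-i1, c-i2]) =
      (-1:ℚ)^(a+b+c) * ((a.factorial : ℚ) * b.factorial * c.factorial *
        ∑ y ∈ range (c+1), ((b+y).choose b : ℚ) * (PowerSeries.coeff a F)
          * (PowerSeries.coeff (b+y) F) * (PowerSeries.coeff (c-y) F))
      from rhs_total F a b c]
  rw [show (∑ y ∈ range (c+1), ((b+y).choose b : ℚ) * (PowerSeries.coeff a F)
      * (PowerSeries.coeff (b+y) F) * (PowerSeries.coeff (c-y) F))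
    = (PowerSeries.coeff a F) * ∑ y ∈ range (c+1), ((b+y).choose b : ℚ)
      * (PowerSeries.coeff (b+y) F) * (PowerSeries.coeff (c-y) F) by
    rw [Finset.mul_sum]; exact Finset.sum_congr rfl fun y _ => by ring]
  ring
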